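/- Let E be a real separable Hilbert space with orthonormal basis {e_i}, Vₙ = span{e₁,…,eₙ}, Ω ⊆ E open and connected, and K ⊆ Ω ∩ Vₙ compact. Then there exists m ≥ n such that K is contained in a single connected component of Ω ∩ Vₘ. -/

import Mathlib

open Bornology RealInnerProductSpace Topology

/-- Orthogonal projection onto the span of the first `n` vectors of the
orthonormal (Hilbert) basis `b`. -/
noncomputable def projN {E : Type*} [NormedAddCommGroup E] [InnerProductSpace ℝ E]
    (b : HilbertBasis ℕ ℝ E) (n : ℕ) (x : E) : E :=
  ∑ i ∈ Finset.range n, ⟪b i, x⟫ • b i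

set_option linter.unusedSectionVars false

section helpers
variable {E : Type*} [NormedAddCommGroup E] [InnerProductSpace ℝ E] [CompleteSpace E]
  (b : HilbertBasis ℕ ℝ E)

lemma projN_continuous (m : ℕ) : Continuous (projN b m) := by
  unfold projN
  exact continuous_finset_sum _ fun i _ =>
    ((continuous_const.inner continuous_id).smul continuous_const)

lemma projN_sub (m : ℕ) (x y : E) : projN b m x - projN b m y = projN b m (x - y) := by
  unfold projN
  rw [← Finset.sum_sub_distrib]
  congr 1; funext i
  rw [inner_sub_right, sub_smul]

lemma projN_norm_le (m : ℕ) (x : E) : ‖projN b m x‖ ≤ ‖x‖ := by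
  have h1 : ‖projN b m x‖ ^ 2 = ∑ i ∈ Finset.range m, ‖⟪b i, x⟫‖ ^ 2 := by
    rw [← real_inner_self_eq_norm_sq]
    unfold projN
    rw [b.orthonormal.inner_sum]
    simp [starRingEnd_apply, Real.norm_eq_abs, sq_abs, pow_two]
  have h2 := b.orthonormal.sum_inner_products_le (s := Finset.range m) x
  have := h1 ▸ h2
  exact (pow_le_pow_iff_left₀ (norm_nonneg _) (norm_nonneg _) two_ne_zero).mp this

lemma projN_mem_span (m : ℕ) (x : E) :
    projN b m x ∈ Submodule.span ℝ (b '' Set.Iio m) := by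
  apply Submodule.sum_mem
  intro i hi
  exact Submodule.smul_mem _ _ (Submodule.subset_span ⟨i, Finset.mem_range.mp hi, rfl⟩)

lemma projN_fixes {n m : ℕ} (hnm : n ≤ m) {x : E}
    (hx : x ∈ Submodule.span ℝ (b '' Set.Iio n)) : projN b m x = x := by
  induction hx using Submodule.span_induction with
  | mem z hz =>
    obtain ⟨j, hj, rfl⟩ := hz
    unfold projN
    classical
    have : ∀ i ∈ Finset.range m, ⟪b i, b j⟫ • b i = if j = i then b j else 0 := by
      intro i _
      rw [orthonormal_iff_ite.mp b.orthonormal]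
      by_cases h : i = j
      · simp [h]
      · simp [h, Ne.symm h]
    rw [Finset.sum_congr rfl this, Finset.sum_ite_eq (Finset.range m) j fun _ => b j]
    simp [Finset.mem_range.mpr (lt_of_lt_of_le hj hnm)]
  | zero => simp [projN]
  | add z w _ _ hz hw =>
    unfold projN at *
    simp only [inner_add_right, add_smul, Finset.sum_add_distrib, hz, hw]
  | smul c z _ hz =>
    unfold projN at *
    simp only [inner_smul_right, mul_smul, ← Finset.smul_sum, hz]

lemma projN_tendsto (x : E) :
    Filter.Tendsto (fun m => projN b m x) Filter.atTop (nhds x) := by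
  have := (b.hasSum_repr x).tendsto_sum_nat
  simpa [projN, b.repr_apply_apply] using this

lemma projN_unif (C : Set E) (hC : IsCompact C) {ε : ℝ} (hε : 0 < ε) :
    ∃ N : ℕ, ∀ m ≥ N, ∀ z ∈ C, ‖projN b m z - z‖ < ε := by
  obtain ⟨t, htC, hcover⟩ := hC.elim_nhds_subcover (fun y => Metric.ball y (ε/3))
    (fun y _ => Metric.ball_mem_nhds y (by positivity))
  have hev : ∀ᶠ m in Filter.atTop, ∀ y ∈ t, ‖projN b m y - y‖ < ε/3 := by
    rw [Filter.eventually_all_finset]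
    intro y _
    have h := Metric.tendsto_atTop.mp (projN_tendsto b y) (ε/3) (by positivity)
    obtain ⟨N, hN⟩ := h
    filter_upwards [Filter.eventually_ge_atTop N] with m hm
    simpa [dist_eq_norm] using hN m hm
  obtain ⟨N, hN⟩ := Filter.eventually_atTop.mp hev
  refine ⟨N, fun m hm z hz => ?_⟩
  obtain ⟨y, hy, hzy⟩ := Set.mem_iUnion₂.mp (hcover hz)
  have h1 : ‖projN b m z - projN b m y‖ ≤ ‖z - y‖ := by
    rw [projN_sub]; exact projN_norm_le b m _
  have h2 := hN m hm y hy
  have h3 : ‖z - y‖ < ε/3 := by rw [← dist_eq_norm]; exact Metric.mem_ball.mp hzy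
  have heq : projN b m z - z =
      (projN b m z - projN b m y) + (projN b m y - y) + (y - z) := by abel
  have h4 : ‖y - z‖ = ‖z - y‖ := norm_sub_rev y z
  calc ‖projN b m z - z‖
      ≤ ‖projN b m z - projN b m y‖ + ‖projN b m y - y‖ + ‖y - z‖ := by
        rw [heq]; exact norm_add₃_le
    _ < ε := by rw [h4]; linarith

end helpers

/-- If `Ω` is open connected and `K ⊆ Ω ∩ Vₙ` is compact, then `K` lies in a single
connected component of `Ω ∩ Vₘ` for `m` large enough. -/
theorem stmt8 {E : Type*} [NormedAddCommGroup E] [InnerProductSpace ℝ E]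
    [CompleteSpace E] (b : HilbertBasis ℕ ℝ E)
    (Ω : Set E) (hΩo : IsOpen Ω) (hΩc : IsConnected Ω)
    (n : ℕ) (K : Set E) (hK : IsCompact K)
    (hKΩ : K ⊆ Ω ∩ (Submodule.span ℝ (b '' Set.Iio n) : Submodule ℝ E)) :
    ∃ m ≥ n, ∀ x ∈ K, ∀ y ∈ K,
      connectedComponentIn (Ω ∩ (Submodule.span ℝ (b '' Set.Iio m) : Submodule ℝ E)) x =
      connectedComponentIn (Ω ∩ (Submodule.span ℝ (b '' Set.Iio m) : Submodule ℝ E)) y := by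
  classical
  rcases K.eq_empty_or_nonempty with rfl | ⟨x₀, hx₀⟩
  · exact ⟨n, le_rfl, by simp⟩
  set V : ℕ → Set E := fun m => ((Submodule.span ℝ (b '' Set.Iio m) : Submodule ℝ E) : Set E)
    with hV
  have hVmono : ∀ {m m' : ℕ}, m ≤ m' → V m ⊆ V m' := fun h =>
    Submodule.span_mono (Set.image_mono (Set.Iio_subset_Iio h))
  have hpath : IsPathConnected Ω := hΩo.isConnected_iff_isPathConnected.mp hΩc
  have key : ∀ y ∈ K, ∃ m ≥ n, y ∈ connectedComponentIn (Ω ∩ V m) x₀ := by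
    intro y hy
    obtain ⟨γ, hγ⟩ := hpath.joinedIn x₀ (hKΩ hx₀).1 y (hKΩ hy).1
    have hCcomp : IsCompact (Set.range γ) := isCompact_range γ.continuous
    have hCΩ : Set.range γ ⊆ Ω := by rintro _ ⟨s, rfl⟩; exact hγ s
    obtain ⟨ε, hε, hthick⟩ := hCcomp.exists_thickening_subset_open hΩo hCΩ
    obtain ⟨N, hN⟩ := projN_unif b (Set.range γ) hCcomp hε
    refine ⟨max N n, le_max_right _ _, ?_⟩
    set m := max N n with hm
    set S := projN b m '' Set.range γ with hS
    have hScon : IsConnected S :=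
      (isConnected_range γ.continuous).image _ (projN_continuous b m).continuousOn
    have hSsub : S ⊆ Ω ∩ V m := by
      rintro _ ⟨z, hz, rfl⟩
      refine ⟨hthick ?_, projN_mem_span b m z⟩
      rw [Metric.mem_thickening_iff]
      exact ⟨z, hz, by rw [dist_eq_norm]; exact hN m (le_max_left _ _) z hz⟩
    have hx₀S : x₀ ∈ S :=
      ⟨x₀, ⟨0, γ.source⟩, projN_fixes b (le_max_right _ _) (hKΩ hx₀).2⟩
    have hyS : y ∈ S :=
      ⟨y, ⟨1, γ.target⟩, projN_fixes b (le_max_right _ _) (hKΩ hy).2⟩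
    exact hScon.isPreconnected.subset_connectedComponentIn hx₀S hSsub hyS
  choose! m₁ hm₁n hm₁ using key
  have hball : ∀ y ∈ K, ∃ r > 0, Metric.ball y r ⊆ Ω := fun y hy =>
    Metric.isOpen_iff.mp hΩo y (hKΩ hy).1
  choose! r hr hrΩ using hball
  obtain ⟨t, htK, hcover⟩ := hK.elim_nhds_subcover (fun y => Metric.ball y (r y))
    (fun y hy => Metric.ball_mem_nhds y (hr y hy))
  refine ⟨max n (t.sup m₁), le_max_left _ _, ?_⟩
  set M := max n (t.sup m₁) with hM
  have hcomp : ∀ x ∈ K,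
      connectedComponentIn (Ω ∩ V M) x = connectedComponentIn (Ω ∩ V M) x₀ := by
    intro x hx
    obtain ⟨y, hyt, hxy⟩ := Set.mem_iUnion₂.mp (hcover hx)
    have hyK : y ∈ K := htK y hyt
    have hseg : segment ℝ y x ⊆ Ω ∩ V M := by
      intro z hz
      refine ⟨hrΩ y hyK ((convex_ball y (r y)).segment_subset
        (Metric.mem_ball_self (hr y hyK)) hxy hz), ?_⟩
      exact (Submodule.span ℝ (b '' Set.Iio M)).convex.segment_subset
        (hVmono (le_max_left _ _) (hKΩ hyK).2) (hVmono (le_max_left _ _) (hKΩ hx).2) hz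
    have hxcy : x ∈ connectedComponentIn (Ω ∩ V M) y :=
      (convex_segment y x).isPreconnected.subset_connectedComponentIn
        (left_mem_segment ℝ y x) hseg (right_mem_segment ℝ y x)
    have hyc : y ∈ connectedComponentIn (Ω ∩ V M) x₀ := by
      refine connectedComponentIn_mono x₀
        (Set.inter_subset_inter_right Ω (hVmono ?_)) (hm₁ y hyK)
      exact le_trans (Finset.le_sup hyt) (le_max_right _ _)
    exact (connectedComponentIn_eq hxcy).symm.trans (connectedComponentIn_eq hyc).symm
  intro x hx y hy
  rw [hcomp x hx, hcomp y hy]
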